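/- Suppose σ̂_A > σ̂_B and σ̃_A < σ̃_B. Let α_min := min{Φ((Δμ − Δβ)/Δσ̂), Φ(Δμ/Δσ̃)} and α_max := max{Φ((Δμ − Δβ)/Δσ̂), Φ(Δμ/Δσ̃)}. Let γ ∈ [0,1) and assume x^fair(γ) ∈ D. If α ∈ (0, α_min) ∪ (α_max, 1), then Q(α) > Q(x^fair(γ)) ≥ Q(x^obl); that is, imposing demographic parity strictly improves the utility of the group-oblivious selection and imposing the γ-rule weakly improves it. -/

import Mathlib

noncomputable def gpdf (t : ℝ) : ℝ := Real.exp (-t ^ 2 / 2) / Real.sqrt (2 * Real.pi)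

noncomputable def gcdf (x : ℝ) : ℝ := ∫ t in Set.Iic x, gpdf t

noncomputable def gquant : ℝ → ℝ := Function.invFun gcdf

noncomputable def sHat (η σ : ℝ) : ℝ := Real.sqrt (η ^ 2 + σ ^ 2)

noncomputable def sTil (η σ : ℝ) : ℝ := η ^ 2 / sHat η σ

def Dset (pA α : ℝ) : Set ℝ :=
  {x | x ∈ Set.Ioo (0:ℝ) 1 ∧ (α - pA * x) / (1 - pA) ∈ Set.Ioo (0:ℝ) 1}

noncomputable def Qfun (pA α μA μB sA sB x : ℝ) : ℝ :=
  (1 / α) * (pA * (μA * x + sA * gpdf (gquant (1 - x)))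
    + (1 - pA) * (μB * ((α - pA * x) / (1 - pA))
      + sB * gpdf (gquant (1 - (α - pA * x) / (1 - pA)))))

noncomputable def clampTo (lo hi x : ℝ) : ℝ := min hi (max lo x)

open MeasureTheory Real Set Filter Topology



lemma gpdf_pos (t : ℝ) : 0 < gpdf t := by
  unfold gpdf
  positivity

lemma gpdf_eq (t : ℝ) : gpdf t = Real.exp (-(1/2) * t ^ 2) / Real.sqrt (2 * Real.pi) := by
  unfold gpdf; ring_nf

lemma gpdf_cont : Continuous gpdf := by
  unfold gpdf
  fun_prop

lemma gpdf_integrable : Integrable gpdf := by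
  have h : Integrable (fun t : ℝ => Real.exp (-(1/2) * t ^ 2)) :=
    integrable_exp_neg_mul_sq (by norm_num)
  have := h.div_const (Real.sqrt (2 * Real.pi))
  refine this.congr (Eventually.of_forall fun t => ?_)
  rw [gpdf_eq]

lemma integral_gpdf : ∫ t, gpdf t = 1 := by
  have h : ∫ t : ℝ, Real.exp (-(1/2) * t ^ 2) = Real.sqrt (Real.pi / (1/2)) :=
    integral_gaussian (1/2)
  have h2 : ∫ t, gpdf t = (∫ t : ℝ, Real.exp (-(1/2) * t ^ 2)) / Real.sqrt (2 * Real.pi) := by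
    rw [← integral_div]
    congr 1; funext t; rw [gpdf_eq]
  rw [h2, h]
  rw [show Real.pi / (1/2) = 2 * Real.pi by ring]
  rw [div_self]
  positivity

lemma gpdf_neg (t : ℝ) : gpdf (-t) = gpdf t := by
  unfold gpdf; rw [neg_pow]; ring_nf

lemma gcdf_sub (a b : ℝ) : gcdf b - gcdf a = ∫ t in a..b, gpdf t := by
  unfold gcdf
  rw [intervalIntegral.integral_Iic_sub_Iic gpdf_integrable.integrableOn
    gpdf_integrable.integrableOn]

lemma gcdf_hasDerivAt (x : ℝ) : HasDerivAt gcdf (gpdf x) x := by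
  have h : ∀ y, gcdf y = gcdf 0 + ∫ t in (0:ℝ)..y, gpdf t := by
    intro y; rw [← gcdf_sub]; ring
  have hd : HasDerivAt (fun y => gcdf 0 + ∫ t in (0:ℝ)..y, gpdf t) (gpdf x) x := by
    refine HasDerivAt.const_add _ ?_
    exact intervalIntegral.integral_hasDerivAt_right
      (gpdf_integrable.intervalIntegrable)
      (gpdf_cont.stronglyMeasurableAtFilter _ _) gpdf_cont.continuousAt
  exact hd.congr_of_eventuallyEq (Eventually.of_forall h)

lemma gcdf_strictMono : StrictMono gcdf := by
  intro a b hab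
  have := gcdf_sub a b
  have hpos : 0 < ∫ t in a..b, gpdf t :=
    intervalIntegral.intervalIntegral_pos_of_pos
      (gpdf_integrable.intervalIntegrable) gpdf_pos hab
  linarith

lemma gcdf_nonneg (x : ℝ) : 0 ≤ gcdf x :=
  integral_nonneg fun t => (gpdf_pos t).le

lemma gcdf_le_one (x : ℝ) : gcdf x ≤ 1 := by
  rw [← integral_gpdf]
  exact setIntegral_le_integral gpdf_integrable
    (Eventually.of_forall fun t => (gpdf_pos t).le)

lemma gcdf_pos (x : ℝ) : 0 < gcdf x :=
  lt_of_le_of_lt (gcdf_nonneg (x - 1)) (gcdf_strictMono (by linarith))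

lemma gcdf_lt_one (x : ℝ) : gcdf x < 1 :=
  lt_of_lt_of_le (gcdf_strictMono (show x < x + 1 by linarith)) (gcdf_le_one _)

lemma gcdf_neg_eq (x : ℝ) : gcdf (-x) = 1 - gcdf x := by
  have h1 : gcdf (-x) = ∫ t in Ioi x, gpdf t := by
    unfold gcdf
    rw [show Ioi x = Ioi (- - x) by rw [neg_neg]]
    rw [← integral_comp_neg_Iic]
    exact setIntegral_congr_fun measurableSet_Iic (fun t _ => (gpdf_neg t).symm)
  have h2 : gcdf x + ∫ t in Ioi x, gpdf t = 1 := by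
    unfold gcdf
    rw [intervalIntegral.integral_Iic_add_Ioi gpdf_integrable.integrableOn
      gpdf_integrable.integrableOn, integral_gpdf]
  linarith

lemma gcdf_tendsto_atTop : Tendsto gcdf atTop (𝓝 1) := by
  have := (MeasureTheory.aecover_Iic (tendsto_id (α := ℝ))).integral_tendsto_of_countably_generated gpdf_integrable
  rwa [integral_gpdf] at this

lemma gcdf_continuous : Continuous gcdf :=
  continuous_iff_continuousAt.2 fun x => (gcdf_hasDerivAt x).continuousAt

lemma gcdf_exists_gt {p : ℝ} (hp : p < 1) : ∃ b, p < gcdf b := by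
  by_contra h
  push_neg at h
  have := le_of_tendsto gcdf_tendsto_atTop (Eventually.of_forall h)
  linarith

lemma gcdf_exists_lt {p : ℝ} (hp : 0 < p) : ∃ a, gcdf a < p := by
  obtain ⟨b, hb⟩ := gcdf_exists_gt (show 1 - p < 1 by linarith)
  exact ⟨-b, by rw [gcdf_neg_eq]; linarith⟩

lemma gcdf_surj {p : ℝ} (hp : p ∈ Set.Ioo (0:ℝ) 1) : ∃ x, gcdf x = p := by
  obtain ⟨a, ha⟩ := gcdf_exists_lt hp.1
  obtain ⟨b, hb⟩ := gcdf_exists_gt hp.2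
  have hab : a ≤ b := by
    by_contra hc
    push_neg at hc
    have := gcdf_strictMono hc
    linarith
  have := intermediate_value_Icc hab gcdf_continuous.continuousOn
    (show p ∈ Set.Icc (gcdf a) (gcdf b) by constructor <;> linarith)
  obtain ⟨x, _, hx⟩ := this
  exact ⟨x, hx⟩

lemma gcdf_gquant {p : ℝ} (hp : p ∈ Set.Ioo (0:ℝ) 1) : gcdf (gquant p) = p :=
  Function.invFun_eq (gcdf_surj hp)

lemma gquant_gcdf (x : ℝ) : gquant (gcdf x) = x :=
  Function.leftInverse_invFun gcdf_strictMono.injective x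

lemma gquant_lt_iff {p : ℝ} (hp : p ∈ Set.Ioo (0:ℝ) 1) {t : ℝ} :
    gquant p < t ↔ p < gcdf t := by
  rw [← gcdf_strictMono.lt_iff_lt, gcdf_gquant hp]

lemma lt_gquant_iff {p : ℝ} (hp : p ∈ Set.Ioo (0:ℝ) 1) {t : ℝ} :
    t < gquant p ↔ gcdf t < p := by
  rw [← gcdf_strictMono.lt_iff_lt, gcdf_gquant hp]

lemma gquant_lt_gquant {p q : ℝ} (hp : p ∈ Set.Ioo (0:ℝ) 1) (hq : q ∈ Set.Ioo (0:ℝ) 1)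
    (hpq : p < q) : gquant p < gquant q := by
  rw [gquant_lt_iff hp, gcdf_gquant hq]; exact hpq

lemma gquant_continuousAt {p : ℝ} (hp : p ∈ Set.Ioo (0:ℝ) 1) : ContinuousAt gquant p := by
  rw [ContinuousAt, tendsto_order]
  constructor
  · intro a ha
    have h1 : gcdf a < p := by rwa [← lt_gquant_iff hp]
    have hev : Set.Ioo (gcdf a) 1 ∈ 𝓝 p := Ioo_mem_nhds h1 hp.2
    filter_upwards [hev] with q hq
    rw [lt_gquant_iff ⟨lt_trans (gcdf_pos a) hq.1, hq.2⟩]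
    exact hq.1
  · intro a ha
    have h1 : p < gcdf a := by rwa [← gquant_lt_iff hp]
    have hev : Set.Ioo 0 (gcdf a) ∈ 𝓝 p := Ioo_mem_nhds hp.1 h1
    filter_upwards [hev] with q hq
    rw [gquant_lt_iff ⟨hq.1, lt_trans hq.2 (gcdf_lt_one a)⟩]
    exact hq.2

lemma gquant_hasDerivAt {p : ℝ} (hp : p ∈ Set.Ioo (0:ℝ) 1) :
    HasDerivAt gquant (gpdf (gquant p))⁻¹ p := by
  have h1 : HasDerivAt gcdf (gpdf (gquant p)) (gquant p) := gcdf_hasDerivAt _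
  refine HasDerivAt.of_local_left_inverse (gquant_continuousAt hp) h1
    (gpdf_pos _).ne' ?_
  filter_upwards [Ioo_mem_nhds hp.1 hp.2] with q hq
  exact gcdf_gquant hq

noncomputable def Qder (pA α μA μB sA sB x : ℝ) : ℝ :=
  (pA / α) * ((μA - μB) + sA * gquant (1 - x)
    - sB * gquant (1 - (α - pA * x) / (1 - pA)))

lemma gpdf_hasDerivAt (u : ℝ) : HasDerivAt gpdf (-u * gpdf u) u := by
  have h1 : HasDerivAt (fun t : ℝ => -t ^ 2 / 2) (-u) u := by
    have := ((hasDerivAt_pow 2 u).neg).div_const 2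
    refine this.congr_deriv ?_
    push_cast; ring
  have h2 := (h1.exp).div_const (Real.sqrt (2 * Real.pi))
  refine h2.congr_deriv ?_
  unfold gpdf; ring

lemma G_hasDerivAt {x : ℝ} (hx : x ∈ Set.Ioo (0:ℝ) 1) :
    HasDerivAt (fun x => gpdf (gquant (1 - x))) (gquant (1 - x)) x := by
  have h1x : (1 - x) ∈ Set.Ioo (0:ℝ) 1 := ⟨by linarith [hx.2], by linarith [hx.1]⟩
  set q := gquant (1 - x) with hq
  have hsub : HasDerivAt (fun x : ℝ => 1 - x) (-1) x := (hasDerivAt_id x).const_sub 1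
  have hinner : HasDerivAt (fun x : ℝ => gquant (1 - x)) ((gpdf q)⁻¹ * (-1)) x :=
    (gquant_hasDerivAt h1x).comp x hsub
  have houter := gpdf_hasDerivAt q
  have htotal := houter.comp x hinner
  refine htotal.congr_deriv ?_
  have hne : gpdf q ≠ 0 := (gpdf_pos q).ne'
  field_simp

lemma Qfun_hasDerivAt {pA α : ℝ} (hpA : pA ∈ Set.Ioo (0:ℝ) 1) (hα0 : 0 < α)
    (μA μB sA sB : ℝ) {x : ℝ} (hx : x ∈ Dset pA α) :
    HasDerivAt (Qfun pA α μA μB sA sB) (Qder pA α μA μB sA sB x) x := by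
  obtain ⟨hx01, hy01⟩ := hx
  have hpB : (0:ℝ) < 1 - pA := by linarith [hpA.2]
  have hy : HasDerivAt (fun x : ℝ => (α - pA * x) / (1 - pA)) (-pA / (1 - pA)) x := by
    have h := (((hasDerivAt_id x).const_mul pA).const_sub α).div_const (1 - pA)
    refine h.congr_deriv ?_
    ring
  have hA : HasDerivAt (fun x => μA * x + sA * gpdf (gquant (1 - x)))
      (μA + sA * gquant (1 - x)) x := by
    have h1 := (hasDerivAt_id x).const_mul μA
    have h2 := (G_hasDerivAt hx01).const_mul sA
    refine (h1.add h2).congr_deriv ?_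
    ring
  have hB : HasDerivAt
      (fun x => μB * ((α - pA * x) / (1 - pA))
        + sB * gpdf (gquant (1 - (α - pA * x) / (1 - pA))))
      (μB * (-pA / (1 - pA))
        + sB * (gquant (1 - (α - pA * x) / (1 - pA)) * (-pA / (1 - pA)))) x := by
    have h1 := hy.const_mul μB
    have hcomp : HasDerivAt (fun x => gpdf (gquant (1 - (α - pA * x) / (1 - pA))))
        (gquant (1 - (α - pA * x) / (1 - pA)) * (-pA / (1 - pA))) x :=
      by have := (G_hasDerivAt hy01).comp x hy; exact this
    have h2 := hcomp.const_mul sB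
    exact h1.add h2
  have htot := ((hA.const_mul pA).add (hB.const_mul (1 - pA))).const_mul (1 / α)
  have heq : HasDerivAt (Qfun pA α μA μB sA sB)
      (1 / α * (pA * (μA + sA * gquant (1 - x))
        + (1 - pA) * (μB * (-pA / (1 - pA))
          + sB * (gquant (1 - (α - pA * x) / (1 - pA)) * (-pA / (1 - pA)))))) x := htot
  convert heq using 1
  unfold Qder
  field_simp
  ring

/-- comparison of the group-oblivious selection rate with the budget. -/
lemma obl_compare (pA α μA μB βA βB θ sA sB : ℝ)
    (hpA : pA ∈ Set.Ioo (0:ℝ) 1) (hs : 0 < sB) (hss : sB < sA)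
    (hθ : pA * (1 - gcdf ((θ - μA + βA) / sA))
        + (1 - pA) * (1 - gcdf ((θ - μB + βB) / sB)) = α) :
    (gcdf (((μA - μB) - (βA - βB)) / (sA - sB)) < α → 1 - gcdf ((θ - μA + βA) / sA) < α)
    ∧ (α < gcdf (((μA - μB) - (βA - βB)) / (sA - sB)) → α < 1 - gcdf ((θ - μA + βA) / sA)) := by
  have hsA : (0:ℝ) < sA := lt_trans hs hss
  have hd : (0:ℝ) < sA - sB := by linarith
  set zA := (θ - μA + βA) / sA with hzA
  set zB := (θ - μB + βB) / sB with hzB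
  set zs := (-((μA - μB) - (βA - βB))) / (sA - sB) with hzs
  have hc1 : gcdf (((μA - μB) - (βA - βB)) / (sA - sB)) = 1 - gcdf zs := by
    rw [hzs, neg_div, gcdf_neg_eq]
    ring
  constructor
  · intro hc
    by_contra hcon
    push_neg at hcon
    -- xobl ≥ α hence yobl ≤ α, so zA ≤ zB
    have hy : 1 - gcdf zB ≤ α := by nlinarith [hpA.1, hpA.2]
    have hzAB : zA ≤ zB := by
      have : gcdf zA ≤ gcdf zB := by nlinarith [hpA.1, hpA.2]
      exact gcdf_strictMono.le_iff_le.mp this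
    have hcross : (θ - μA + βA) * sB ≤ (θ - μB + βB) * sA := by
      rw [hzA, hzB, div_le_div_iff₀ hsA hs] at hzAB
      linarith
    have hzAzs : zs ≤ zA := by
      rw [hzA, hzs, div_le_div_iff₀ hd hsA]
      nlinarith
    have : gcdf zs ≤ gcdf zA := gcdf_strictMono.le_iff_le.mpr hzAzs
    rw [hc1] at hc
    linarith
  · intro hc
    by_contra hcon
    push_neg at hcon
    have hy : α ≤ 1 - gcdf zB := by nlinarith [hpA.1, hpA.2]
    have hzAB : zB ≤ zA := by
      have : gcdf zB ≤ gcdf zA := by nlinarith [hpA.1, hpA.2]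
      exact gcdf_strictMono.le_iff_le.mp this
    have hcross : (θ - μB + βB) * sA ≤ (θ - μA + βA) * sB := by
      rw [hzA, hzB, div_le_div_iff₀ hs hsA] at hzAB
      linarith
    have hzAzs : zA ≤ zs := by
      rw [hzA, hzs, div_le_div_iff₀ hsA hd]
      nlinarith
    have : gcdf zA ≤ gcdf zs := gcdf_strictMono.le_iff_le.mpr hzAzs
    rw [hc1] at hc
    linarith


lemma mem_Dset_iff {pA α x : ℝ} (hpB : (0:ℝ) < 1 - pA) :
    x ∈ Dset pA α ↔ 0 < x ∧ x < 1 ∧ 0 < α - pA * x ∧ α - pA * x < 1 - pA := by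
  unfold Dset
  simp only [Set.mem_setOf_eq, Set.mem_Ioo]
  constructor
  · rintro ⟨⟨h1, h2⟩, h3, h4⟩
    refine ⟨h1, h2, ?_, ?_⟩
    · have := (div_pos_iff).mp h3
      rcases this with ⟨a, _⟩ | ⟨_, b⟩
      · exact a
      · linarith
    · rw [div_lt_one hpB] at h4
      exact h4
  · rintro ⟨h1, h2, h3, h4⟩
    exact ⟨⟨h1, h2⟩, div_pos h3 hpB, (div_lt_one hpB).mpr h4⟩

lemma Icc_subset_Dset {pA α a b : ℝ} (hpB : (0:ℝ) < 1 - pA)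
    (ha : a ∈ Dset pA α) (hb : b ∈ Dset pA α) (hpA : 0 < pA) :
    Set.Icc a b ⊆ Dset pA α := by
  intro x hx
  rw [mem_Dset_iff hpB] at ha hb ⊢
  obtain ⟨hx1, hx2⟩ := hx
  have h1 : pA * x ≤ pA * b := by nlinarith
  have h2 : pA * a ≤ pA * x := by nlinarith
  exact ⟨by linarith [ha.1], by linarith [hb.2.1], by linarith [hb.2.2.1],
    by linarith [ha.2.2.2]⟩

lemma alpha_mem_Dset {pA α : ℝ} (hpA : pA ∈ Set.Ioo (0:ℝ) 1)
    (hα : α ∈ Set.Ioo (0:ℝ) 1) : α ∈ Dset pA α := by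
  have hpB : (0:ℝ) < 1 - pA := by linarith [hpA.2]
  rw [mem_Dset_iff hpB]
  refine ⟨hα.1, hα.2, ?_, ?_⟩ <;> nlinarith [hpA.1, hα.1, hα.2]

/-- Qder is strictly decreasing on Dset. -/
lemma Qder_anti {pA α μA μB sA sB : ℝ} (hpA : pA ∈ Set.Ioo (0:ℝ) 1)
    (hα0 : 0 < α) (hsA : 0 < sA) (hsB : 0 < sB) {x x' : ℝ}
    (hx : x ∈ Dset pA α) (hx' : x' ∈ Dset pA α) (hlt : x < x') :
    Qder pA α μA μB sA sB x' < Qder pA α μA μB sA sB x := by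
  have hpB : (0:ℝ) < 1 - pA := by linarith [hpA.2]
  rw [mem_Dset_iff hpB] at hx hx'
  have h1x : (1 - x) ∈ Set.Ioo (0:ℝ) 1 := ⟨by linarith [hx.2.1], by linarith [hx.1]⟩
  have h1x' : (1 - x') ∈ Set.Ioo (0:ℝ) 1 := ⟨by linarith [hx'.2.1], by linarith [hx'.1]⟩
  set y := (α - pA * x) / (1 - pA) with hy
  set y' := (α - pA * x') / (1 - pA) with hy'
  have hyy' : y' < y := by
    rw [hy, hy', div_lt_div_iff₀ hpB hpB]
    nlinarith [mul_lt_mul_of_pos_left hlt hpA.1]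
  have hy01 : y ∈ Set.Ioo (0:ℝ) 1 := ⟨div_pos hx.2.2.1 hpB, (div_lt_one hpB).mpr hx.2.2.2⟩
  have hy'01 : y' ∈ Set.Ioo (0:ℝ) 1 := ⟨div_pos hx'.2.2.1 hpB, (div_lt_one hpB).mpr hx'.2.2.2⟩
  have h1y : (1 - y) ∈ Set.Ioo (0:ℝ) 1 := ⟨by linarith [hy01.2], by linarith [hy01.1]⟩
  have h1y' : (1 - y') ∈ Set.Ioo (0:ℝ) 1 := ⟨by linarith [hy'01.2], by linarith [hy'01.1]⟩
  have hq1 : gquant (1 - x') < gquant (1 - x) :=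
    gquant_lt_gquant h1x' h1x (by linarith)
  have hq2 : gquant (1 - y) < gquant (1 - y') :=
    gquant_lt_gquant h1y h1y' (by linarith)
  unfold Qder
  rw [← hy, ← hy']
  have hpα : 0 < pA / α := div_pos hpA.1 hα0
  have : sA * gquant (1 - x') - sB * gquant (1 - y')
      < sA * gquant (1 - x) - sB * gquant (1 - y) := by nlinarith
  nlinarith

/-- sign of Qder at the demographic parity point α. -/
lemma Qder_at_alpha {pA α μA μB sA sB : ℝ} (hpA : pA ∈ Set.Ioo (0:ℝ) 1)
    (hα : α ∈ Set.Ioo (0:ℝ) 1) (hsAB : sA < sB) :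
    (gcdf ((μA - μB) / (sA - sB)) < α → 0 < Qder pA α μA μB sA sB α)
    ∧ (α < gcdf ((μA - μB) / (sA - sB)) → Qder pA α μA μB sA sB α < 0) := by
  have hpB : (0:ℝ) < 1 - pA := by linarith [hpA.2]
  have hyα : (α - pA * α) / (1 - pA) = α := by
    field_simp
  have hd : sA - sB < 0 := by linarith
  have h1α : (1 - α) ∈ Set.Ioo (0:ℝ) 1 := ⟨by linarith [hα.2], by linarith [hα.1]⟩
  set q := gquant (1 - α) with hqdef
  have hgq : gcdf q = 1 - α := gcdf_gquant h1α
  have hQ : Qder pA α μA μB sA sB α = (pA / α) * ((μA - μB) + (sA - sB) * q) := by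
    unfold Qder
    rw [hyα, ← hqdef]
    ring
  have hpα : 0 < pA / α := div_pos hpA.1 hα.1
  have hkey : gcdf ((μA - μB) / (sA - sB)) = 1 - gcdf (-((μA - μB) / (sA - sB))) := by
    rw [gcdf_neg_eq]; ring
  constructor
  · intro hc
    -- α > c2 ⟹ 1 - α < gcdf(-(m/d)) ⟹ q < -(m/d)
    have h2 : 1 - α < gcdf (-((μA - μB) / (sA - sB))) := by
      rw [hkey] at hc; linarith
    have h3 : q < -((μA - μB) / (sA - sB)) :=
      gcdf_strictMono.lt_iff_lt.mp (by rw [hgq]; exact h2)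
    have h4 : (μA - μB) + (sA - sB) * q > 0 := by
      rw [neg_div' ] at h3
      rw [lt_div_iff_of_neg hd] at h3
      linarith
    rw [hQ]
    positivity
  · intro hc
    have h2 : gcdf (-((μA - μB) / (sA - sB))) < 1 - α := by
      rw [hkey] at hc; linarith
    have h3 : -((μA - μB) / (sA - sB)) < q :=
      gcdf_strictMono.lt_iff_lt.mp (by rw [hgq]; exact h2)
    have h4 : (μA - μB) + (sA - sB) * q < 0 := by
      rw [neg_div'] at h3
      rw [div_lt_iff_of_neg hd] at h3
      linarith
    rw [hQ]
    exact mul_neg_of_pos_of_neg hpα h4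

/-- for budgets outside `[α_min, α_max]`, demographic parity strictly
improves, and the `γ`-rule weakly improves, the utility of the group-oblivious
selection. -/
theorem stmt6 (pA α μA μB ηA ηB σA σB βA βB θ γ xobl xfair : ℝ)
    (hpA : pA ∈ Set.Ioo (0:ℝ) 1) (hα01 : α ∈ Set.Ioo (0:ℝ) 1)
    (hηA : 0 < ηA) (hηB : 0 < ηB) (hσA : 0 < σA) (hσB : 0 < σB)
    (hshat : sHat ηB σB < sHat ηA σA) (hstil : sTil ηA σA < sTil ηB σB)
    (hγ : γ ∈ Set.Ico (0:ℝ) 1)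
    (hθ : pA * (1 - gcdf ((θ - μA + βA) / sHat ηA σA))
        + (1 - pA) * (1 - gcdf ((θ - μB + βB) / sHat ηB σB)) = α)
    (hxobl : xobl = 1 - gcdf ((θ - μA + βA) / sHat ηA σA))
    (hxfair : xfair = clampTo (γ * α / ((1 - pA) + γ * pA)) (α / (pA + γ * (1 - pA))) xobl)
    (hfD : xfair ∈ Dset pA α)
    (hα : α ∈ Set.Ioo (0:ℝ)
            (min (gcdf (((μA - μB) - (βA - βB)) / (sHat ηA σA - sHat ηB σB)))
                 (gcdf ((μA - μB) / (sTil ηA σA - sTil ηB σB))))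
          ∪ Set.Ioo
            (max (gcdf (((μA - μB) - (βA - βB)) / (sHat ηA σA - sHat ηB σB)))
                 (gcdf ((μA - μB) / (sTil ηA σA - sTil ηB σB)))) 1) :
    Qfun pA α μA μB (sTil ηA σA) (sTil ηB σB) xfair
      < Qfun pA α μA μB (sTil ηA σA) (sTil ηB σB) α
    ∧ Qfun pA α μA μB (sTil ηA σA) (sTil ηB σB) xobl
      ≤ Qfun pA α μA μB (sTil ηA σA) (sTil ηB σB) xfair := by
  have hpB : (0:ℝ) < 1 - pA := by linarith [hpA.2]
  have hα0 : (0:ℝ) < α := hα01.1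
  have hsHatB : 0 < sHat ηB σB := by
    unfold sHat; positivity
  have hsA : 0 < sTil ηA σA := by
    unfold sTil sHat; positivity
  have hsB : 0 < sTil ηB σB := by
    unfold sTil sHat; positivity
  set Q := Qfun pA α μA μB (sTil ηA σA) (sTil ηB σB) with hQ
  set c1 := gcdf (((μA - μB) - (βA - βB)) / (sHat ηA σA - sHat ηB σB)) with hc1
  set c2 := gcdf ((μA - μB) / (sTil ηA σA - sTil ηB σB)) with hc2
  -- xobl ∈ Dset
  have hxoblD : xobl ∈ Dset pA α := by
    rw [mem_Dset_iff hpB, hxobl]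
    have h1 := gcdf_pos ((θ - μA + βA) / sHat ηA σA)
    have h2 := gcdf_lt_one ((θ - μA + βA) / sHat ηA σA)
    have h3 := gcdf_pos ((θ - μB + βB) / sHat ηB σB)
    have h4 := gcdf_lt_one ((θ - μB + βB) / sHat ηB σB)
    refine ⟨by linarith, by linarith, ?_, ?_⟩ <;> nlinarith [hpA.1, hpA.2]
  have hαD : α ∈ Dset pA α := alpha_mem_Dset hpA hα01
  -- clamp bounds
  set lo := γ * α / ((1 - pA) + γ * pA) with hlo_def
  set hi := α / (pA + γ * (1 - pA)) with hhi_def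
  have hden1 : 0 < (1 - pA) + γ * pA := by nlinarith [hγ.1, hpA.1]
  have hden2 : 0 < pA + γ * (1 - pA) := by nlinarith [hγ.1, hpA.1]
  have hlo : lo < α := by
    rw [hlo_def, div_lt_iff₀ hden1]
    nlinarith [mul_pos hα0 (mul_pos hpB (sub_pos.mpr hγ.2))]
  have hhi : α < hi := by
    rw [hhi_def, lt_div_iff₀ hden2]
    nlinarith [mul_pos hα0 (mul_pos hpB (sub_pos.mpr hγ.2))]
  -- derivative facts
  have hderiv : ∀ x ∈ Dset pA α, deriv Q x = Qder pA α μA μB (sTil ηA σA) (sTil ηB σB) x :=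
    fun x hx => (Qfun_hasDerivAt hpA hα0 μA μB _ _ hx).deriv
  have hcontD : ∀ x ∈ Dset pA α, ContinuousAt Q x :=
    fun x hx => (Qfun_hasDerivAt hpA hα0 μA μB _ _ hx).continuousAt
  rcases hα with ⟨_, hαmin⟩ | ⟨hαmax, _⟩
  · -- α < min c1 c2 : xobl > α, Q strictly decreasing on [α, xobl]
    rw [lt_min_iff] at hαmin
    have hobl : α < xobl := by
      rw [hxobl]
      exact (obl_compare pA α μA μB βA βB θ _ _ hpA hsHatB hshat hθ).2 hαmin.1
    have hxf : xfair = min hi xobl := by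
      rw [hxfair]
      unfold clampTo
      rw [max_eq_right (le_of_lt (lt_trans hlo hobl))]
    have hxf_gt : α < xfair := by
      rw [hxf, lt_min_iff]; exact ⟨hhi, hobl⟩
    have hxf_le : xfair ≤ xobl := by rw [hxf]; exact min_le_right _ _
    have hIcc : Set.Icc α xobl ⊆ Dset pA α := Icc_subset_Dset hpB hαD hxoblD hpA.1
    have hanti : StrictAntiOn Q (Set.Icc α xobl) := by
      refine strictAntiOn_of_deriv_neg (convex_Icc _ _)
        (fun x hx => (hcontD x (hIcc hx)).continuousWithinAt) ?_
      intro x hx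
      rw [interior_Icc] at hx
      rw [hderiv x (hIcc ⟨hx.1.le, hx.2.le⟩)]
      have h1 : Qder pA α μA μB (sTil ηA σA) (sTil ηB σB) x
          < Qder pA α μA μB (sTil ηA σA) (sTil ηB σB) α :=
        Qder_anti hpA hα0 hsA hsB hαD (hIcc ⟨hx.1.le, hx.2.le⟩) hx.1
      have h2 : Qder pA α μA μB (sTil ηA σA) (sTil ηB σB) α < 0 :=
        (Qder_at_alpha hpA hα01 hstil).2 hαmin.2
      linarith
    have hxfIcc : xfair ∈ Set.Icc α xobl := ⟨hxf_gt.le, hxf_le⟩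
    have hαIcc : α ∈ Set.Icc α xobl := ⟨le_refl _, hobl.le⟩
    have hoblIcc : xobl ∈ Set.Icc α xobl := ⟨hobl.le, le_refl _⟩
    exact ⟨hanti hαIcc hxfIcc hxf_gt, hanti.antitoneOn hxfIcc hoblIcc hxf_le⟩
  · -- max < α : xobl < α, Q strictly increasing on [xobl, α]
    rw [max_lt_iff] at hαmax
    have hobl : xobl < α := by
      rw [hxobl]
      exact (obl_compare pA α μA μB βA βB θ _ _ hpA hsHatB hshat hθ).1 hαmax.1
    have hxf : xfair = max lo xobl := by
      rw [hxfair]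
      unfold clampTo
      refine min_eq_right ?_
      rw [max_le_iff]
      exact ⟨le_of_lt (lt_trans hlo hhi), le_of_lt (lt_trans hobl hhi)⟩
    have hxf_lt : xfair < α := by
      rw [hxf, max_lt_iff]; exact ⟨hlo, hobl⟩
    have hxf_ge : xobl ≤ xfair := by rw [hxf]; exact le_max_right _ _
    have hIcc : Set.Icc xobl α ⊆ Dset pA α := Icc_subset_Dset hpB hxoblD hαD hpA.1
    have hmono : StrictMonoOn Q (Set.Icc xobl α) := by
      refine strictMonoOn_of_deriv_pos (convex_Icc _ _)
        (fun x hx => (hcontD x (hIcc hx)).continuousWithinAt) ?_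
      intro x hx
      rw [interior_Icc] at hx
      rw [hderiv x (hIcc ⟨hx.1.le, hx.2.le⟩)]
      have h1 : Qder pA α μA μB (sTil ηA σA) (sTil ηB σB) α
          < Qder pA α μA μB (sTil ηA σA) (sTil ηB σB) x :=
        Qder_anti hpA hα0 hsA hsB (hIcc ⟨hx.1.le, hx.2.le⟩) hαD hx.2
      have h2 : 0 < Qder pA α μA μB (sTil ηA σA) (sTil ηB σB) α :=
        (Qder_at_alpha hpA hα01 hstil).1 hαmax.2
      linarith
    have hxfIcc : xfair ∈ Set.Icc xobl α := ⟨hxf_ge, hxf_lt.le⟩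
    have hαIcc : α ∈ Set.Icc xobl α := ⟨hobl.le, le_refl _⟩
    have hoblIcc : xobl ∈ Set.Icc xobl α := ⟨le_refl _, hobl.le⟩
    exact ⟨hmono hxfIcc hαIcc hxf_lt, hmono.monotoneOn hoblIcc hxfIcc hxf_ge⟩
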